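/- Let M be a self-adjoint operator on a complex Hilbert space H with M ≥ c > 0 (coercive), and let J be a unitary, skew-adjoint operator on H commuting with the domain structure (J² = −Id). Then for every t ∈ ℝ, the operator e^{−t M^{1/2} J M^{1/2}} is unitary on H, and M^{−1/2} e^{−t M^{1/2} J M^{1/2}} M^{1/2} defines a uniformly bounded (in t) group of operators on the domain of M equipped with the graph norm, whose trajectories solve Φ'(t) = −J M Φ(t). -/

import Mathlib

/- STATEMENT 7: For M self-adjoint coercive (M ≥ c > 0) and J unitary skew-adjoint with
J² = −Id, the operator e^{−t M^{1/2} J M^{1/2}} is unitary for every t, the family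
M^{−1/2} e^{−t M^{1/2} J M^{1/2}} M^{1/2} is uniformly bounded in t, and its trajectories
solve Φ'(t) = −J M Φ(t). -/

open scoped ComplexInnerProductSpace

noncomputable section

set_option maxHeartbeats 1000000 in
set_option synthInstance.maxHeartbeats 1000000 in
theorem hamiltonian_propagator_stability
    {H : Type*} [NormedAddCommGroup H] [InnerProductSpace ℂ H] [CompleteSpace H]
    (M J : H →L[ℂ] H) (hM : IsSelfAdjoint M)
    (c : ℝ) (hc : 0 < c) (hcoer : ∀ x : H, c * ‖x‖ ^ 2 ≤ (⟪x, M x⟫).re)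
    (hJu : J ∈ unitary (H →L[ℂ] H)) (hJskew : ∀ x y : H, ⟪J x, y⟫ = -⟪x, J y⟫)
    (hJ2 : J.comp J = -1) :
    (∀ t : ℝ, NormedSpace.exp ((-t) • ((cfc Real.sqrt M).comp
        (J.comp (cfc Real.sqrt M)))) ∈ unitary (H →L[ℂ] H)) ∧
    (∃ C : ℝ, ∀ t : ℝ,
      ‖(cfc (fun x : ℝ => (Real.sqrt x)⁻¹) M).comp
        ((NormedSpace.exp ((-t) • ((cfc Real.sqrt M).comp
          (J.comp (cfc Real.sqrt M))))).comp (cfc Real.sqrt M))‖ ≤ C) ∧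
    (∀ (Φ0 : H) (t : ℝ),
      HasDerivAt
        (fun s : ℝ => ((cfc (fun x : ℝ => (Real.sqrt x)⁻¹) M).comp
          ((NormedSpace.exp ((-s) • ((cfc Real.sqrt M).comp
            (J.comp (cfc Real.sqrt M))))).comp (cfc Real.sqrt M))) Φ0)
        (-(J (M (((cfc (fun x : ℝ => (Real.sqrt x)⁻¹) M).comp
          ((NormedSpace.exp ((-t) • ((cfc Real.sqrt M).comp
            (J.comp (cfc Real.sqrt M))))).comp (cfc Real.sqrt M))) Φ0))))
        t) := by
  -- notation
  set S : H →L[ℂ] H := cfc Real.sqrt M with hSdef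
  set B : H →L[ℂ] H := cfc (fun x : ℝ => (Real.sqrt x)⁻¹) M with hBdef
  set A : H →L[ℂ] H := S.comp (J.comp S) with hAdef
  -- spectrum is contained in [c, ∞)
  have hpos : (0 : H →L[ℂ] H) ≤ M - (algebraMap ℝ (H →L[ℂ] H)) c := by
    rw [ContinuousLinearMap.nonneg_iff_isPositive]
    constructor
    · exact ContinuousLinearMap.isSelfAdjoint_iff_isSymmetric.mp (hM.sub (IsSelfAdjoint.algebraMap _ (star_trivial c)))
    · intro x
      have h0 : (⟪c • x, x⟫).re = c * ‖x‖ ^ 2 := by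
        rw [← Complex.coe_smul, inner_smul_left, inner_self_eq_norm_sq_to_K]
        simp [← Complex.ofReal_pow]
      have h1 : (⟪(M - (algebraMap ℝ (H →L[ℂ] H)) c) x, x⟫).re
          = (⟪M x, x⟫).re - c * ‖x‖ ^ 2 := by
        simp only [ContinuousLinearMap.sub_apply, inner_sub_left, Complex.sub_re,
          Algebra.algebraMap_eq_smul_one, ContinuousLinearMap.smul_apply,
          ContinuousLinearMap.one_apply, h0]
      have h2 : (⟪M x, x⟫).re = (⟪x, M x⟫).re := by
        rw [← inner_conj_symm x (M x), Complex.conj_re]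
      have h3 : ContinuousLinearMap.reApplyInnerSelf (M - (algebraMap ℝ (H →L[ℂ] H)) c) x
          = (⟪(M - (algebraMap ℝ (H →L[ℂ] H)) c) x, x⟫).re := rfl
      rw [h3, h1, h2]
      linarith [hcoer x]
  have hspec : ∀ x ∈ spectrum ℝ M, c ≤ x := by
    intro x hx
    have hx' : x - c ∈ spectrum ℝ (M - (algebraMap ℝ (H →L[ℂ] H)) c) := by
      rw [← spectrum.sub_singleton_eq]
      exact Set.sub_mem_sub hx rfl
    have := spectrum_nonneg_of_nonneg hpos hx'
    linarith
  -- basic selfadjointness from cfc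
  have hSsa : IsSelfAdjoint S := cfc_predicate _ _
  have hBsa : IsSelfAdjoint B := cfc_predicate _ _
  -- J is skew-adjoint
  have hJstar : star J = -J := by
    have : (-J) = ContinuousLinearMap.adjoint J := by
      refine (ContinuousLinearMap.eq_adjoint_iff (-J) J).mpr fun x y => ?_
      rw [ContinuousLinearMap.neg_apply, inner_neg_left, hJskew, neg_neg]
    simp [ContinuousLinearMap.star_eq_adjoint, ← this]
  -- A is skew-adjoint
  have hAskew : A ∈ skewAdjoint (H →L[ℂ] H) := by
    rw [skewAdjoint.mem_iff]
    have : A = S * J * S := by rw [hAdef]; rfl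
    rw [this, star_mul, star_mul, hSsa.star_eq, hJstar]
    simp [mul_assoc]
  -- Part 1: unitarity
  have hu : ∀ t : ℝ, NormedSpace.exp ((-t) • A) ∈ unitary (H →L[ℂ] H) := by
    intro t
    letI : NormedAlgebra ℚ (H →L[ℂ] H) := NormedAlgebra.restrictScalars ℚ ℂ (H →L[ℂ] H)
    exact NormedSpace.exp_mem_unitary_of_mem_skewAdjoint
      (skewAdjoint.smul_mem (-t) hAskew)
  refine ⟨hu, ?_, ?_⟩
  -- Part 2: uniform bound
  · refine ⟨‖B‖ * ‖S‖, fun t => ?_⟩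
    rcases subsingleton_or_nontrivial H with hH | hH
    · have : (B.comp ((NormedSpace.exp ((-t) • A)).comp S)) = 0 :=
        Subsingleton.elim _ _
      rw [this, norm_zero]
      positivity
    · haveI : Nontrivial (H →L[ℂ] H) := by
        obtain ⟨x, hx⟩ := exists_ne (0 : H)
        refine ⟨1, 0, fun h => hx ?_⟩
        simpa using DFunLike.congr_fun h x
      calc ‖B.comp ((NormedSpace.exp ((-t) • A)).comp S)‖
          ≤ ‖B‖ * ‖(NormedSpace.exp ((-t) • A)).comp S‖ :=
            ContinuousLinearMap.opNorm_comp_le _ _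
        _ ≤ ‖B‖ * (‖NormedSpace.exp ((-t) • A)‖ * ‖S‖) :=
            mul_le_mul_of_nonneg_left (ContinuousLinearMap.opNorm_comp_le _ _)
              (norm_nonneg _)
        _ = ‖B‖ * ‖S‖ := by rw [CStarRing.norm_of_mem_unitary (hu t)]; ring
  -- Part 3: derivative
  · intro Φ0 t
    -- cfc algebra
    have hsqrt_cont : ContinuousOn Real.sqrt (spectrum ℝ M) :=
      Real.continuous_sqrt.continuousOn
    have hsqrt_ne : ∀ x ∈ spectrum ℝ M, Real.sqrt x ≠ 0 := fun x hx =>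
      ne_of_gt (Real.sqrt_pos.mpr (lt_of_lt_of_le hc (hspec x hx)))
    have hinv_cont : ContinuousOn (fun x : ℝ => (Real.sqrt x)⁻¹) (spectrum ℝ M) :=
      hsqrt_cont.inv₀ hsqrt_ne
    have hBS : B * S = 1 := by
      rw [hBdef, hSdef, ← cfc_mul _ _ M hinv_cont hsqrt_cont]
      rw [show (fun x : ℝ => (Real.sqrt x)⁻¹ * Real.sqrt x) = fun x : ℝ =>
        if Real.sqrt x = 0 then 0 else 1 from funext fun x => by
          by_cases h : Real.sqrt x = 0 <;> simp [h, inv_mul_cancel₀]]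
      rw [← cfc_const_one ℝ M hM]
      exact cfc_congr fun x hx => by simp [hsqrt_ne x hx]
    have hSB : S * B = 1 := by
      rw [hSdef, hBdef, ← cfc_mul _ _ M hsqrt_cont hinv_cont]
      rw [← cfc_const_one ℝ M hM]
      exact cfc_congr fun x hx => by
        simp [mul_inv_cancel₀ (hsqrt_ne x hx)]
    have hSS : S * S = M := by
      rw [hSdef, ← cfc_mul _ _ M hsqrt_cont hsqrt_cont]
      nth_rewrite 2 [← cfc_id ℝ M hM]
      exact cfc_congr fun x hx =>
        Real.mul_self_sqrt (le_trans hc.le (hspec x hx))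
    -- the derivative of the exponential family
    have hexp : HasDerivAt (fun s : ℝ => NormedSpace.exp ((-s) • A))
        ((-A) * NormedSpace.exp ((-t) • A)) t := by
      have h1 : HasDerivAt (fun s : ℝ => NormedSpace.exp (s • (-A)))
          ((-A) * NormedSpace.exp (t • (-A))) t :=
        hasDerivAt_exp_smul_const' (-A) t
      have h2 : ∀ s : ℝ, s • (-A) = (-s) • A := fun s => by
        rw [smul_neg, neg_smul]
      simpa [h2] using h1
    -- apply the continuous linear map "B ∘ (eval at S Φ0)"
    set L : (H →L[ℂ] H) →L[ℝ] H :=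
      ((B.comp (ContinuousLinearMap.apply ℂ H (S Φ0))).restrictScalars ℝ) with hLdef
    have hD : HasDerivAt (fun s : ℝ => L (NormedSpace.exp ((-s) • A)))
        (L ((-A) * NormedSpace.exp ((-t) • A))) t :=
      L.hasFDerivAt.comp_hasDerivAt t hexp
    -- identify the function and value
    have hfun : (fun s : ℝ => L (NormedSpace.exp ((-s) • A)))
        = fun s : ℝ => (B.comp ((NormedSpace.exp ((-s) • A)).comp S)) Φ0 := rfl
    have hval : L ((-A) * NormedSpace.exp ((-t) • A))
        = -(J (M ((B.comp ((NormedSpace.exp ((-t) • A)).comp S)) Φ0))) := by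
      set U := NormedSpace.exp ((-t) • A) with hU
      have lhs : L ((-A) * U) = ((-(B * A)) * U) (S Φ0) := by
        simp [hLdef, mul_assoc]
      have hBA : B * A = J.comp S := by
        have : A = S * (J * S) := by rw [hAdef]; rfl
        rw [this, ← mul_assoc, hBS, one_mul]; rfl
      have hMB : M.comp B = S := by
        have : M.comp B = M * B := rfl
        rw [this, ← hSS, mul_assoc, hSB, mul_one]
      have rhs : -(J (M ((B.comp (U.comp S)) Φ0))) = -(J (S (U (S Φ0)))) := by
        have : M (B (U (S Φ0))) = (M.comp B) (U (S Φ0)) := rfl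
        simp only [ContinuousLinearMap.comp_apply]
        rw [this, hMB]
      rw [lhs, rhs, hBA]
      simp [ContinuousLinearMap.mul_apply]
    rw [hfun] at hD
    rw [← hval]
    exact hD
end
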